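/- arXiv:2310.11692 — 2 statements merged into one kernel-verified Lean document; each statement's English description precedes it below -/
import Mathlib

section
/- Let L be a real symmetric n×n matrix with eigendecomposition L = U Λ Uᵀ, U orthogonal, eigenvalues λ₁ ≤ ⋯ ≤ λₙ. Let g be a real polynomial with g(λⱼ) ≠ 0 for 1 ≤ j ≤ k, let Φ = g(L) with rows φᵢᵀ, and U_k the first k columns of U. Then for every probability vector p = (p₁,…,pₙ) with pᵢ > 0 and ∑ᵢ pᵢ = 1, the coherence ζ = max_{1≤i≤n} ‖U_kᵀ φᵢ‖₂²/pᵢ satisfies ζ ≥ ∑_{j=1}^{k} g(λⱼ)², and consequently (3ζ/(c₁δ²))·log(2k/ε) ≥ (3k/δ²)·log(2k/ε) for any δ, ε ∈ (0,1), where c₁ = min_{1≤j≤k} g(λⱼ)². -/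
open Matrix

theorem aeval_diag (n : ℕ) (d : Fin n → ℝ) (g : Polynomial ℝ) :
    (Polynomial.aeval (Matrix.diagonal d) g : Matrix (Fin n) (Fin n) ℝ)
      = Matrix.diagonal (fun i => g.eval (d i)) := by
  rw [show Matrix.diagonal d = Matrix.diagonalAlgHom ℝ d from rfl,
    Polynomial.aeval_algHom_apply]
  show Matrix.diagonal (Polynomial.aeval d g) = _
  have h : (Polynomial.aeval d g : Fin n → ℝ) = fun i => g.eval (d i) := by
    funext i
    have := Polynomial.aeval_algHom_apply (Pi.evalAlgHom ℝ (fun _ : Fin n => ℝ) i) d g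
    simpa [Polynomial.coe_aeval_eq_eval] using this.symm
  rw [h]

theorem conj_aeval (n : ℕ) (U D : Matrix (Fin n) (Fin n) ℝ)
    (hU : Uᵀ * U = 1) (hU' : U * Uᵀ = 1) (g : Polynomial ℝ) :
    Polynomial.aeval (U * D * Uᵀ) g = U * Polynomial.aeval D g * Uᵀ := by
  have pow_conj : ∀ m : ℕ, (U * D * Uᵀ) ^ m = U * D ^ m * Uᵀ := by
    intro m
    induction m with
    | zero => simp [hU']
    | succ m ih =>
        rw [pow_succ, ih, pow_succ]
        calc U * D ^ m * Uᵀ * (U * D * Uᵀ)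
            = U * D ^ m * (Uᵀ * U) * D * Uᵀ := by noncomm_ring
          _ = U * (D ^ m * D) * Uᵀ := by rw [hU]; noncomm_ring
  induction g using Polynomial.induction_on' with
  | add p q hp hq =>
      simp [map_add, hp, hq, Matrix.mul_add, Matrix.add_mul]
  | monomial m a =>
      rw [Polynomial.aeval_monomial, Polynomial.aeval_monomial, pow_conj,
        Algebra.algebraMap_eq_smul_one]
      simp [Matrix.smul_mul, Matrix.mul_smul]

/-- Remark II.1: for any sampling probability distribution `p` with positive entries,
the graph weighted coherence `ζ = maxᵢ ‖U_kᵀ φᵢ‖₂²/pᵢ` satisfies `ζ ≥ ∑_{j=1}^k g(λⱼ)²`,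
and consequently `(3ζ/(c₁δ²))·log(2k/ε) ≥ (3k/δ²)·log(2k/ε)`. -/
theorem coherence_lower_bound (n k : ℕ) (hk : k ≤ n)
    (L U : Matrix (Fin n) (Fin n) ℝ) (lam : Fin n → ℝ) (hmono : Monotone lam)
    (hU : Uᵀ * U = 1) (hU' : U * Uᵀ = 1)
    (hL : L = U * Matrix.diagonal lam * Uᵀ)
    (g : Polynomial ℝ) (hg : ∀ j : Fin k, g.eval (lam (Fin.castLE hk j)) ≠ 0)
    (Φ : Matrix (Fin n) (Fin n) ℝ) (hΦ : Φ = Polynomial.aeval L g)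
    (Uk : Matrix (Fin n) (Fin k) ℝ) (hUk : Uk = U.submatrix id (Fin.castLE hk))
    (p : Fin n → ℝ) (hp : ∀ i, 0 < p i) (hp1 : ∑ i, p i = 1)
    (ζ c₁ : ℝ)
    (hζ : ζ = ⨆ i : Fin n, (∑ j : Fin k, ((Ukᵀ *ᵥ Φ i) j) ^ 2) / p i)
    (hc₁ : c₁ = ⨅ j : Fin k, (g.eval (lam (Fin.castLE hk j))) ^ 2)
    (δ ε : ℝ) (hδ : δ ∈ Set.Ioo (0 : ℝ) 1) (hε : ε ∈ Set.Ioo (0 : ℝ) 1) :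
    (∑ j : Fin k, (g.eval (lam (Fin.castLE hk j))) ^ 2 ≤ ζ) ∧
      (3 * k / δ ^ 2 * Real.log (2 * k / ε) ≤
        3 * ζ / (c₁ * δ ^ 2) * Real.log (2 * k / ε)) := by
  set gl : Fin n → ℝ := fun a => g.eval (lam a) with hgl
  have hΦ' : Φ = U * Matrix.diagonal gl * Uᵀ := by
    rw [hΦ, hL, conj_aeval n U _ hU hU', aeval_diag]
  have horth : ∀ j' a : Fin n, ∑ l, U l j' * U l a = if j' = a then 1 else 0 := by
    intro j' a
    have := congrFun (congrFun hU j') a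
    simpa [Matrix.mul_apply, Matrix.one_apply, Matrix.transpose_apply] using this
  have key : ∀ (i : Fin n) (j : Fin k),
      (Ukᵀ *ᵥ Φ i) j = gl (Fin.castLE hk j) * U i (Fin.castLE hk j) := by
    intro i j
    set j' : Fin n := Fin.castLE hk j with hj'
    calc (Ukᵀ *ᵥ Φ i) j
        = ∑ l, U l j' * Φ i l := by
          simp [Matrix.mulVec, dotProduct, hUk, Matrix.transpose_apply,
            Matrix.submatrix_apply, hj']
      _ = ∑ l, U l j' * ∑ a, U i a * gl a * U l a := by
          refine Finset.sum_congr rfl fun l _ => ?_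
          congr 1
          rw [hΦ', Matrix.mul_apply]
          exact Finset.sum_congr rfl fun a _ => by
            rw [Matrix.mul_diagonal, Matrix.transpose_apply]
      _ = ∑ a, U i a * gl a * ∑ l, U l j' * U l a := by
          simp_rw [Finset.mul_sum]
          rw [Finset.sum_comm]
          exact Finset.sum_congr rfl fun a _ => Finset.sum_congr rfl fun l _ => by ring
      _ = gl j' * U i j' := by
          simp_rw [horth]
          simp [Finset.sum_ite_eq, mul_comm]
  have hcol : ∀ j' : Fin n, ∑ i, (U i j') ^ 2 = 1 := by
    intro j'
    have := horth j' j'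
    simpa [sq] using this
  -- part 1
  have hbdd : BddAbove (Set.range fun i : Fin n =>
      (∑ j : Fin k, ((Ukᵀ *ᵥ Φ i) j) ^ 2) / p i) := (Set.finite_range _).bddAbove
  have hterm : ∀ i, ∑ j : Fin k, ((Ukᵀ *ᵥ Φ i) j) ^ 2 ≤ ζ * p i := by
    intro i
    have h1 : (∑ j : Fin k, ((Ukᵀ *ᵥ Φ i) j) ^ 2) / p i ≤ ζ := hζ ▸ le_ciSup hbdd i
    calc ∑ j : Fin k, ((Ukᵀ *ᵥ Φ i) j) ^ 2
        = (∑ j : Fin k, ((Ukᵀ *ᵥ Φ i) j) ^ 2) / p i * p i :=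
          (div_mul_cancel₀ _ (hp i).ne').symm
      _ ≤ ζ * p i := mul_le_mul_of_nonneg_right h1 (hp i).le
  have part1 : ∑ j : Fin k, (gl (Fin.castLE hk j)) ^ 2 ≤ ζ := by
    calc ∑ j : Fin k, (gl (Fin.castLE hk j)) ^ 2
        = ∑ j : Fin k, ∑ i, (gl (Fin.castLE hk j)) ^ 2 * (U i (Fin.castLE hk j)) ^ 2 := by
          refine Finset.sum_congr rfl fun j _ => ?_
          rw [← Finset.mul_sum, hcol, mul_one]
      _ = ∑ i, ∑ j : Fin k, (gl (Fin.castLE hk j)) ^ 2 * (U i (Fin.castLE hk j)) ^ 2 :=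
          Finset.sum_comm
      _ = ∑ i, ∑ j : Fin k, ((Ukᵀ *ᵥ Φ i) j) ^ 2 := by
          refine Finset.sum_congr rfl fun i _ => Finset.sum_congr rfl fun j _ => ?_
          rw [key, mul_pow]
      _ ≤ ∑ i, ζ * p i := Finset.sum_le_sum fun i _ => hterm i
      _ = ζ := by rw [← Finset.mul_sum, hp1, mul_one]
  refine ⟨part1, ?_⟩
  -- part 2
  rcases Nat.eq_zero_or_pos k with hk0 | hkpos
  · subst hk0
    simp
  · have hδ2 : 0 < δ ^ 2 := pow_pos hδ.1 2
    have hne : Nonempty (Fin k) := ⟨⟨0, hkpos⟩⟩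
    have hc₁pos : 0 < c₁ := by
      obtain ⟨jm, hjm⟩ := Finite.exists_min
        (fun j : Fin k => (gl (Fin.castLE hk j)) ^ 2)
      have h0 : 0 < (gl (Fin.castLE hk jm)) ^ 2 :=
        pow_two_pos_of_ne_zero (hg jm)
      have : (gl (Fin.castLE hk jm)) ^ 2 ≤ c₁ := hc₁ ▸ le_ciInf hjm
      linarith
    have hc₁le : ∀ j : Fin k, c₁ ≤ (gl (Fin.castLE hk j)) ^ 2 := by
      intro j
      exact hc₁ ▸ ciInf_le (Set.finite_range _).bddBelow j
    have hkc : (k : ℝ) * c₁ ≤ ζ := by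
      calc (k : ℝ) * c₁ = ∑ _j : Fin k, c₁ := by
            simp [Finset.sum_const, mul_comm]
        _ ≤ ∑ j : Fin k, (gl (Fin.castLE hk j)) ^ 2 :=
            Finset.sum_le_sum fun j _ => hc₁le j
        _ ≤ ζ := part1
    have hζpos : 0 < ζ := by
      have : (0 : ℝ) < (k : ℝ) * c₁ := by
        have : (1 : ℝ) ≤ (k : ℝ) := by exact_mod_cast hkpos
        nlinarith
      linarith
    have hlog : 0 ≤ Real.log (2 * k / ε) := by
      apply Real.log_nonneg
      rw [le_div_iff₀ hε.1]
      have h1 : (1 : ℝ) ≤ (k : ℝ) := by exact_mod_cast hkpos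
      nlinarith [hε.2]
    refine mul_le_mul_of_nonneg_right ?_ hlog
    rw [div_le_div_iff₀ hδ2 (by positivity)]
    nlinarith [mul_le_mul_of_nonneg_left hkc (le_of_lt (by positivity : (0:ℝ) < 3 * δ ^ 2))]
end

section
/- There exists an absolute constant γ > 0 with the following property. Let L be a real symmetric n×n matrix with eigendecomposition L = U Λ Uᵀ, U orthogonal, eigenvalues λ₁ ≤ ⋯ ≤ λₙ with λ_k < λ_{k+1}, let Φ with rows φᵢᵀ be any real n×n matrix, and let U_k be the first k columns of U. Let r¹,…,rᵗ ∈ ℝⁿ be independent zero-mean Gaussian random vectors each with covariance matrix (1/t)·I, and set r^ℓ_b = U_k U_kᵀ r^ℓ (the filtering of r^ℓ by the ideal low-pass filter with cut-off frequency λ_k). Then for any ε, δ ∈ (0,1), if t ≥ (γ/δ²)·log(2n/ε), with probability at least 1−ε the following holds simultaneously for all i ∈ {1,…,n}: (1−δ)·‖U_kᵀ φᵢ‖₂² ≤ ∑_{ℓ=1}^{t} ⟨r^ℓ_b, φᵢ⟩² ≤ (1+δ)·‖U_kᵀ φᵢ‖₂². -/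
open Matrix MeasureTheory ProbabilityTheory Real
open scoped NNReal ENNReal

section Aux

lemma gauss1 {v : ℝ≥0} (hv : v ≠ 0) (θ a c : ℝ)
    (h : 2*θ*(v:ℝ)*a^2 < 1) :
    Integrable (fun x => Real.exp (θ*(c + a*x)^2)) (gaussianReal 0 v) ∧
    ∫ x, Real.exp (θ*(c + a*x)^2) ∂(gaussianReal 0 v)
      = Real.exp (θ*c^2/(1 - 2*θ*(v:ℝ)*a^2)) / Real.sqrt (1 - 2*θ*(v:ℝ)*a^2) := by
  have hw0 : 0 < (v:ℝ) := by exact_mod_cast pos_iff_ne_zero.mpr hv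
  have hD : 0 < 1 - 2*θ*(v:ℝ)*a^2 := by linarith
  have hP : 0 < (1 - 2*θ*(v:ℝ)*a^2)/(2*(v:ℝ)) := by positivity
  have hexp : ∀ x : ℝ, -(x-0)^2/(2*(v:ℝ)) + θ*(c+a*x)^2
      = θ*c^2/(1 - 2*θ*(v:ℝ)*a^2)
        + (-((1 - 2*θ*(v:ℝ)*a^2)/(2*(v:ℝ)))*(x - 2*(v:ℝ)*θ*a*c/(1 - 2*θ*(v:ℝ)*a^2))^2) := by
    intro x
    obtain ⟨D, hDd⟩ : ∃ D, D = 1 - 2*θ*(v:ℝ)*a^2 := ⟨_, rfl⟩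
    have hne : D ≠ 0 := hDd ▸ hD.ne'
    rw [← hDd]
    field_simp
    rw [hDd]
    ring
  have hpt : ∀ x : ℝ, gaussianPDFReal 0 v x * Real.exp (θ*(c + a*x)^2)
      = ((Real.sqrt (2*π*(v:ℝ)))⁻¹ * Real.exp (θ*c^2/(1 - 2*θ*(v:ℝ)*a^2)))
        * Real.exp (-((1 - 2*θ*(v:ℝ)*a^2)/(2*(v:ℝ)))*(x - 2*(v:ℝ)*θ*a*c/(1 - 2*θ*(v:ℝ)*a^2))^2) := by
    intro x
    rw [gaussianPDFReal, mul_assoc, ← Real.exp_add, hexp x, Real.exp_add, ← mul_assoc]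
  have hIvol : Integrable (fun x => ((Real.sqrt (2*π*(v:ℝ)))⁻¹ * Real.exp (θ*c^2/(1 - 2*θ*(v:ℝ)*a^2))) *
      Real.exp (-((1 - 2*θ*(v:ℝ)*a^2)/(2*(v:ℝ)))*(x - 2*(v:ℝ)*θ*a*c/(1 - 2*θ*(v:ℝ)*a^2))^2)) volume :=
    (((integrable_exp_neg_mul_sq hP).comp_sub_right (2*(v:ℝ)*θ*a*c/(1 - 2*θ*(v:ℝ)*a^2))).const_mul _)
  have hmeas : Measurable fun x => (gaussianPDFReal 0 v x).toNNReal :=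
    (measurable_gaussianPDFReal 0 v).real_toNNReal
  have hgr : gaussianReal 0 v = volume.withDensity (fun x => ((gaussianPDFReal 0 v x).toNNReal : ℝ≥0∞)) := by
    rw [gaussianReal_of_var_ne_zero 0 hv]; rfl
  have hsmul : ∀ x : ℝ, (gaussianPDFReal 0 v x).toNNReal • Real.exp (θ*(c + a*x)^2)
      = gaussianPDFReal 0 v x * Real.exp (θ*(c + a*x)^2) := by
    intro x
    rw [NNReal.smul_def, Real.coe_toNNReal _ (gaussianPDFReal_nonneg 0 v x), smul_eq_mul]
  constructor
  · rw [hgr, integrable_withDensity_iff_integrable_smul hmeas]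
    refine hIvol.congr (ae_of_all _ fun x => ?_)
    have := (hpt x).symm.trans (hsmul x).symm
    simpa using this
  · rw [hgr, integral_withDensity_eq_integral_smul hmeas]
    simp_rw [hsmul, hpt]
    rw [integral_const_mul,
      show (∫ x : ℝ, Real.exp (-((1 - 2*θ*(v:ℝ)*a^2)/(2*(v:ℝ)))*(x - 2*(v:ℝ)*θ*a*c/(1 - 2*θ*(v:ℝ)*a^2))^2))
        = ∫ x : ℝ, Real.exp (-((1 - 2*θ*(v:ℝ)*a^2)/(2*(v:ℝ)))*x^2) from
        integral_sub_right_eq_self (fun y => Real.exp (-((1 - 2*θ*(v:ℝ)*a^2)/(2*(v:ℝ)))*y^2)) _,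
      integral_gaussian]
    have harg : π/((1 - 2*θ*(v:ℝ)*a^2)/(2*(v:ℝ))) = (2*π*(v:ℝ))/(1 - 2*θ*(v:ℝ)*a^2) := by
      rw [div_div_eq_mul_div, mul_comm π (2*(v:ℝ))]; ring
    have hs0 : 0 < Real.sqrt (2*π*(v:ℝ)) := Real.sqrt_pos.mpr (by positivity)
    have hsD : 0 < Real.sqrt (1 - 2*θ*(v:ℝ)*a^2) := Real.sqrt_pos.mpr hD
    rw [harg, Real.sqrt_div (by positivity : (0:ℝ) ≤ 2*π*(v:ℝ))]
    field_simp

lemma gaussPi {v : ℝ≥0} (hv : v ≠ 0) :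
    ∀ (m : ℕ) (a : Fin m → ℝ) (θ c : ℝ), 2*θ*(v:ℝ)*(∑ j, (a j)^2) < 1 →
    Integrable (fun x : Fin m → ℝ => Real.exp (θ*(c + ∑ j, a j * x j)^2))
      (Measure.pi fun _ => gaussianReal 0 v) ∧
    ∫ x, Real.exp (θ*(c + ∑ j, a j * x j)^2) ∂(Measure.pi fun _ => gaussianReal 0 v)
      = Real.exp (θ*c^2/(1 - 2*θ*(v:ℝ)*(∑ j, (a j)^2)))
        / Real.sqrt (1 - 2*θ*(v:ℝ)*(∑ j, (a j)^2)) := by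
  intro m
  induction m with
  | zero =>
    intro a θ c h
    simp only [Finset.univ_eq_empty, Finset.sum_empty] at *
    constructor
    · exact integrable_const _
    · simp
  | succ m ih =>
    intro a θ c h
    have hw0 : 0 < (v:ℝ) := by exact_mod_cast pos_iff_ne_zero.mpr hv
    set ρ' : ℝ := ∑ j : Fin m, (a j.succ)^2 with hρ'
    have hρ'0 : 0 ≤ ρ' := Finset.sum_nonneg fun _ _ => sq_nonneg _
    have hsum : (∑ j : Fin (m+1), (a j)^2) = (a 0)^2 + ρ' := by
      rw [Fin.sum_univ_succ]
    rw [hsum] at h ⊢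
    have hD : 0 < 1 - 2*θ*(v:ℝ)*((a 0)^2 + ρ') := by linarith
    have hD' : 0 < 1 - 2*θ*(v:ℝ)*ρ' := by
      rcases le_or_gt θ 0 with hθ | hθ
      · nlinarith [mul_nonneg (neg_nonneg.mpr hθ) (mul_nonneg hw0.le hρ'0)]
      · nlinarith [mul_nonneg (mul_nonneg (by linarith : (0:ℝ) ≤ 2*θ) hw0.le) (sq_nonneg (a 0))]
    have hcond' : 2*θ*(v:ℝ)*ρ' < 1 := by linarith
    have hcondβ : 2*(θ/(1 - 2*θ*(v:ℝ)*ρ'))*(v:ℝ)*(a 0)^2 < 1 := by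
      rw [show 2*(θ/(1 - 2*θ*(v:ℝ)*ρ'))*(v:ℝ)*(a 0)^2
          = (2*θ*(v:ℝ)*(a 0)^2)/(1 - 2*θ*(v:ℝ)*ρ') from by ring,
        div_lt_one hD']
      nlinarith [sq_nonneg (a 0)]
    -- the equivalence
    set e := MeasurableEquiv.piFinSuccAbove (fun _ : Fin (m+1) => ℝ) 0 with he
    have hmp := measurePreserving_piFinSuccAbove (fun _ : Fin (m+1) => gaussianReal 0 v) 0
    set F : ℝ × (Fin m → ℝ) → ℝ :=
      fun p => Real.exp (θ*((c + a 0 * p.1) + ∑ j : Fin m, a j.succ * p.2 j)^2) with hF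
    have hfe : ∀ x : Fin (m+1) → ℝ,
        Real.exp (θ*(c + ∑ j, a j * x j)^2) = F (e x) := by
      intro x
      have hex : e x = (x 0, fun j => x j.succ) := by
        simp [he, MeasurableEquiv.piFinSuccAbove_apply, Fin.removeNth, Fin.zero_succAbove,
          Fin.tail]
        rfl
      rw [hex, hF, Fin.sum_univ_succ]
      ring_nf
    have hFmeas : AEStronglyMeasurable F
        ((gaussianReal 0 v).prod (Measure.pi fun _ : Fin m => gaussianReal 0 v)) := by
      apply Measurable.aestronglyMeasurable
      fun_prop
    have hsec : ∀ x₀ : ℝ, Integrable (fun y : Fin m → ℝ => F (x₀, y))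
        (Measure.pi fun _ => gaussianReal 0 v) := fun x₀ =>
      (ih (fun j => a j.succ) θ (c + a 0 * x₀) hcond').1
    have hval : ∀ x₀ : ℝ, ∫ y : Fin m → ℝ, F (x₀, y) ∂(Measure.pi fun _ => gaussianReal 0 v)
        = (Real.sqrt (1 - 2*θ*(v:ℝ)*ρ'))⁻¹
          * Real.exp ((θ/(1 - 2*θ*(v:ℝ)*ρ'))*(c + a 0 * x₀)^2) := by
      intro x₀
      rw [(ih (fun j => a j.succ) θ (c + a 0 * x₀) hcond').2]
      rw [show θ*(c + a 0 * x₀)^2/(1 - 2*θ*(v:ℝ)*ρ')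
          = (θ/(1 - 2*θ*(v:ℝ)*ρ'))*(c + a 0 * x₀)^2 from by ring,
        div_eq_mul_inv, mul_comm]
    have hg1 := gauss1 hv (θ/(1 - 2*θ*(v:ℝ)*ρ')) (a 0) c hcondβ
    have hFint : Integrable F
        ((gaussianReal 0 v).prod (Measure.pi fun _ : Fin m => gaussianReal 0 v)) := by
      refine (integrable_prod_iff hFmeas).mpr ⟨ae_of_all _ hsec, ?_⟩
      have : (fun x₀ : ℝ => ∫ y, ‖F (x₀, y)‖ ∂(Measure.pi fun _ : Fin m => gaussianReal 0 v))
          = fun x₀ => (Real.sqrt (1 - 2*θ*(v:ℝ)*ρ'))⁻¹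
            * Real.exp ((θ/(1 - 2*θ*(v:ℝ)*ρ'))*(c + a 0 * x₀)^2) := by
        funext x₀
        rw [← hval x₀]
        congr 1
        funext y
        exact Real.norm_of_nonneg (Real.exp_pos _).le
      rw [this]
      exact hg1.1.const_mul _
    constructor
    · simp_rw [hfe]
      rw [← hmp.integrable_comp_emb (MeasurableEquiv.measurableEmbedding e)] at hFint
      exact hFint
    · calc ∫ x : Fin (m+1) → ℝ, Real.exp (θ*(c + ∑ j, a j * x j)^2)
            ∂(Measure.pi fun _ => gaussianReal 0 v)
          = ∫ x, F (e x) ∂(Measure.pi fun _ => gaussianReal 0 v) := by simp_rw [hfe]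
        _ = ∫ p, F p ∂((gaussianReal 0 v).prod (Measure.pi fun _ : Fin m => gaussianReal 0 v)) :=
            hmp.integral_comp' F
        _ = ∫ x₀ : ℝ, (∫ y, F (x₀, y) ∂(Measure.pi fun _ : Fin m => gaussianReal 0 v))
            ∂(gaussianReal 0 v) := integral_prod F hFint
        _ = ∫ x₀ : ℝ, (Real.sqrt (1 - 2*θ*(v:ℝ)*ρ'))⁻¹
            * Real.exp ((θ/(1 - 2*θ*(v:ℝ)*ρ'))*(c + a 0 * x₀)^2) ∂(gaussianReal 0 v) := by
            exact integral_congr_ae (ae_of_all _ hval)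
        _ = (Real.sqrt (1 - 2*θ*(v:ℝ)*ρ'))⁻¹
            * ∫ x₀ : ℝ, Real.exp ((θ/(1 - 2*θ*(v:ℝ)*ρ'))*(c + a 0 * x₀)^2) ∂(gaussianReal 0 v) :=
            integral_const_mul _ _
        _ = (Real.sqrt (1 - 2*θ*(v:ℝ)*ρ'))⁻¹
            * (Real.exp ((θ/(1 - 2*θ*(v:ℝ)*ρ'))*c^2/(1 - 2*(θ/(1 - 2*θ*(v:ℝ)*ρ'))*(v:ℝ)*(a 0)^2))
              / Real.sqrt (1 - 2*(θ/(1 - 2*θ*(v:ℝ)*ρ'))*(v:ℝ)*(a 0)^2)) := by rw [hg1.2]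
        _ = Real.exp (θ*c^2/(1 - 2*θ*(v:ℝ)*((a 0)^2 + ρ')))
            / Real.sqrt (1 - 2*θ*(v:ℝ)*((a 0)^2 + ρ')) := by
            have h1 : 1 - 2*(θ/(1 - 2*θ*(v:ℝ)*ρ'))*(v:ℝ)*(a 0)^2
                = (1 - 2*θ*(v:ℝ)*((a 0)^2 + ρ'))/(1 - 2*θ*(v:ℝ)*ρ') := by
              field_simp
              ring
            have h2 : (θ/(1 - 2*θ*(v:ℝ)*ρ'))*c^2
                /((1 - 2*θ*(v:ℝ)*((a 0)^2 + ρ'))/(1 - 2*θ*(v:ℝ)*ρ'))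
                = θ*c^2/(1 - 2*θ*(v:ℝ)*((a 0)^2 + ρ')) := by
              rw [div_div_eq_mul_div, div_mul_eq_mul_div, div_mul_cancel₀ _ hD'.ne']
            rw [h1, h2, Real.sqrt_div hD.le]
            have e1 : Real.sqrt (1 - 2*θ*(v:ℝ)*ρ') ≠ 0 := (Real.sqrt_pos.mpr hD').ne'
            have e2 : Real.sqrt (1 - 2*θ*(v:ℝ)*((a 0)^2 + ρ')) ≠ 0 := (Real.sqrt_pos.mpr hD).ne'
            field_simp

lemma piProd {α : Type*} [MeasurableSpace α] (μ : Measure α) [IsProbabilityMeasure μ]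
    (g : α → ℝ) (hg : Integrable g μ) :
    ∀ t : ℕ, Integrable (fun x : Fin t → α => ∏ ℓ, g (x ℓ)) (Measure.pi fun _ => μ) ∧
    ∫ x : Fin t → α, ∏ ℓ, g (x ℓ) ∂(Measure.pi fun _ => μ) = (∫ y, g y ∂μ)^t := by
  intro t
  induction t with
  | zero =>
    constructor
    · simp only [Finset.univ_eq_empty, Finset.prod_empty]
      exact integrable_const _
    · simp
  | succ t ih =>
    have hmp := measurePreserving_piFinSuccAbove (fun _ : Fin (t+1) => μ) 0
    set e := MeasurableEquiv.piFinSuccAbove (fun _ : Fin (t+1) => α) 0 with he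
    set F : α × (Fin t → α) → ℝ := fun p => g p.1 * ∏ ℓ : Fin t, g (p.2 ℓ) with hF
    have hfe : ∀ x : Fin (t+1) → α, (∏ ℓ, g (x ℓ)) = F (e x) := by
      intro x
      have hex : e x = (x 0, fun j => x j.succ) := by
        simp [he, MeasurableEquiv.piFinSuccAbove_apply, Fin.removeNth, Fin.zero_succAbove,
          Fin.tail]
        rfl
      rw [hex, hF, Fin.prod_univ_succ]
    have hFint : Integrable F (μ.prod (Measure.pi fun _ : Fin t => μ)) := hg.mul_prod ih.1
    constructor
    · simp_rw [hfe]
      rw [← hmp.integrable_comp_emb (MeasurableEquiv.measurableEmbedding e)] at hFint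
      exact hFint
    · calc ∫ x : Fin (t+1) → α, ∏ ℓ, g (x ℓ) ∂(Measure.pi fun _ => μ)
          = ∫ x, F (e x) ∂(Measure.pi fun _ => μ) := by simp_rw [hfe]
        _ = ∫ p, F p ∂(μ.prod (Measure.pi fun _ : Fin t => μ)) := hmp.integral_comp' F
        _ = (∫ y, g y ∂μ) * ∫ x : Fin t → α, ∏ ℓ, g (x ℓ) ∂(Measure.pi fun _ => μ) :=
            integral_prod_mul g (fun y : Fin t → α => ∏ ℓ, g (y ℓ))
        _ = (∫ y, g y ∂μ)^(t+1) := by rw [ih.2, pow_succ, mul_comm]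

lemma log_ge_one_sub_inv {y : ℝ} (hy : 0 < y) : 1 - 1/y ≤ Real.log y := by
  have h := Real.log_le_sub_one_of_pos (show (0:ℝ) < y⁻¹ by positivity)
  rw [Real.log_inv] at h
  have : (1:ℝ)/y = y⁻¹ := one_div y
  linarith

lemma inv_sqrt_pow_eq {y : ℝ} (hy : 0 < y) (t : ℕ) :
    ((Real.sqrt y)⁻¹)^t = Real.exp (-(t * (Real.log y / 2))) := by
  rw [← Real.log_sqrt hy.le]
  rw [← Real.exp_log (show (0:ℝ) < (Real.sqrt y)⁻¹ by positivity), Real.log_inv,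
    ← Real.exp_nat_mul]
  ring_nf

lemma chern_up {δ : ℝ} (hδ0 : 0 < δ) (hδ1 : δ < 1) (t : ℕ) :
    Real.exp (-((t:ℝ)*δ/8) * (1+δ)) * ((Real.sqrt (1 - δ/4))⁻¹)^t
      ≤ Real.exp (-(δ^2*(t:ℝ)/16)) := by
  have hy : 0 < 1 - δ/4 := by linarith
  rw [inv_sqrt_pow_eq hy, ← Real.exp_add, Real.exp_le_exp]
  have hL : 1 - 1/(1 - δ/4) ≤ Real.log (1 - δ/4) := log_ge_one_sub_inv hy
  have hz : (1 - δ/4) * (1/(1 - δ/4)) = 1 := mul_one_div_cancel hy.ne'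
  have hdz : δ*((1 - δ/4) * (1/(1 - δ/4))) = δ := by rw [hz, mul_one]
  have hz2 : 1/(1 - δ/4) ≤ 2 := by rw [div_le_iff₀ hy]; linarith
  have hprod : 0 ≤ δ^2 * (2 - 1/(1 - δ/4)) := mul_nonneg (sq_nonneg δ) (by linarith)
  have hunit : δ^2/16 ≤ (δ/8)*(1+δ) + Real.log (1 - δ/4)/2 := by nlinarith [hL, hdz, hprod]
  have ht0 : (0:ℝ) ≤ (t:ℝ) := Nat.cast_nonneg t
  calc -((t:ℝ)*δ/8) * (1+δ) + -((t:ℝ) * (Real.log (1 - δ/4) / 2))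
      = -(t:ℝ) * ((δ/8)*(1+δ) + Real.log (1 - δ/4)/2) := by ring
    _ ≤ -(t:ℝ) * (δ^2/16) := mul_le_mul_of_nonpos_left hunit (by linarith)
    _ = -(δ^2*(t:ℝ)/16) := by ring

lemma chern_low {δ : ℝ} (hδ0 : 0 < δ) (hδ1 : δ < 1) (t : ℕ) :
    Real.exp (-(-((t:ℝ)*δ/4)) * (1-δ)) * ((Real.sqrt (1 + δ/2))⁻¹)^t
      ≤ Real.exp (-(δ^2*(t:ℝ)/16)) := by
  have hy : 0 < 1 + δ/2 := by linarith
  rw [inv_sqrt_pow_eq hy, ← Real.exp_add, Real.exp_le_exp]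
  have hL : 1 - 1/(1 + δ/2) ≤ Real.log (1 + δ/2) := log_ge_one_sub_inv hy
  have hz : (1 + δ/2) * (1/(1 + δ/2)) = 1 := mul_one_div_cancel hy.ne'
  have hdz : δ*((1 + δ/2) * (1/(1 + δ/2))) = δ := by rw [hz, mul_one]
  have hz1 : 1/(1 + δ/2) ≤ 1 := by rw [div_le_one hy]; linarith
  have hprod : 0 ≤ δ^2 * (1 - 1/(1 + δ/2)) := mul_nonneg (sq_nonneg δ) (by linarith)
  have hunit : δ^2/16 ≤ Real.log (1 + δ/2)/2 - (δ/4)*(1-δ) := by nlinarith [hL, hdz, hprod]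
  have ht0 : (0:ℝ) ≤ (t:ℝ) := Nat.cast_nonneg t
  calc -(-((t:ℝ)*δ/4)) * (1-δ) + -((t:ℝ) * (Real.log (1 + δ/2) / 2))
      = -(t:ℝ) * (Real.log (1 + δ/2)/2 - (δ/4)*(1-δ)) := by ring
    _ ≤ -(t:ℝ) * (δ^2/16) := mul_le_mul_of_nonpos_left hunit (by linarith)
    _ = -(δ^2*(t:ℝ)/16) := by ring

lemma central (n t : ℕ) (ht : 1 ≤ t) (a : Fin n → ℝ) {δ : ℝ} (hδ0 : 0 < δ) (hδ1 : δ < 1) :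
    (Measure.pi fun _ : Fin t => Measure.pi fun _ : Fin n => gaussianReal 0 (t:NNReal)⁻¹)
      {r : Fin t → Fin n → ℝ | ¬((1-δ) * (∑ s, (a s)^2) ≤ (∑ ℓ, (∑ s, a s * r ℓ s)^2) ∧
          (∑ ℓ, (∑ s, a s * r ℓ s)^2) ≤ (1+δ) * (∑ s, (a s)^2))}
      ≤ ENNReal.ofReal (2 * Real.exp (-(δ^2*(t:ℝ)/16))) := by
  have htR : (0:ℝ) < (t:ℝ) := by exact_mod_cast ht
  have hv : ((t:NNReal))⁻¹ ≠ 0 :=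
    inv_ne_zero (Nat.cast_ne_zero.mpr (by omega))
  have hw : (((t:NNReal)⁻¹ : ℝ≥0) : ℝ) = (t:ℝ)⁻¹ := by push_cast; rfl
  set μ := (Measure.pi fun _ : Fin t => Measure.pi fun _ : Fin n => gaussianReal 0 (t:NNReal)⁻¹)
    with hμ
  set ρ : ℝ := ∑ s, (a s)^2 with hρ
  have hρ0 : 0 ≤ ρ := Finset.sum_nonneg fun _ _ => sq_nonneg _
  rcases eq_or_lt_of_le hρ0 with hρz | hρpos
  · -- all a s = 0
    have hzero : ∀ s, a s = 0 := by
      intro s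
      have := (Finset.sum_eq_zero_iff_of_nonneg (fun i _ => sq_nonneg (a i))).mp hρz.symm
      exact pow_eq_zero_iff (n := 2) (by norm_num) |>.mp (this s (Finset.mem_univ s))
    have : {r : Fin t → Fin n → ℝ | ¬((1-δ) * ρ ≤ (∑ ℓ, (∑ s, a s * r ℓ s)^2) ∧
          (∑ ℓ, (∑ s, a s * r ℓ s)^2) ≤ (1+δ) * ρ)} = ∅ := by
      ext r
      simp only [Set.mem_setOf_eq, Set.mem_empty_iff_false, iff_false, not_not]
      have hz : ∀ ℓ : Fin t, (∑ s, a s * r ℓ s) = 0 := by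
        intro ℓ; apply Finset.sum_eq_zero; intro s _; rw [hzero s, zero_mul]
      simp only [hz]
      rw [← hρz]
      norm_num
    rw [this]
    simp
  · -- normalize
    set u : Fin n → ℝ := fun s => a s / Real.sqrt ρ with hu
    have hsρ : Real.sqrt ρ > 0 := Real.sqrt_pos.mpr hρpos
    have huu : (∑ s, (u s)^2) = 1 := by
      simp only [hu, div_pow, Real.sq_sqrt hρ0]
      rw [← Finset.sum_div, ← hρ, div_self hρpos.ne']
    have htRρ' : 0 < ρ := hρpos
    set X : (Fin t → Fin n → ℝ) → ℝ := fun r => ∑ ℓ, (∑ s, u s * r ℓ s)^2 with hX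
    have hXS : ∀ r : Fin t → Fin n → ℝ, X r = (∑ ℓ, (∑ s, a s * r ℓ s)^2) / ρ := by
      intro r
      rw [hX, Finset.sum_div]
      refine Finset.sum_congr rfl fun ℓ _ => ?_
      have h1 : ∑ s, u s * r ℓ s = (∑ s, a s * r ℓ s)/Real.sqrt ρ := by
        rw [Finset.sum_div]
        refine Finset.sum_congr rfl fun s _ => ?_
        rw [hu]; ring
      rw [h1, div_pow, Real.sq_sqrt hρ0]
    -- mgf machinery
    have hmgf : ∀ θ : ℝ, 2*θ*(t:ℝ)⁻¹ < 1 →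
        Integrable (fun r => Real.exp (θ * X r)) μ ∧
        ∫ r, Real.exp (θ * X r) ∂μ = ((Real.sqrt (1 - 2*θ*(t:ℝ)⁻¹))⁻¹)^t := by
      intro θ hθ
      have hcond : 2*θ*(((t:NNReal)⁻¹ : ℝ≥0):ℝ)*(∑ j, (u j)^2) < 1 := by
        rw [huu, hw]; simpa using hθ
      have hg := gaussPi hv n u θ 0 hcond
      have hval : ∫ x : Fin n → ℝ, Real.exp (θ*(0 + ∑ j, u j * x j)^2)
          ∂(Measure.pi fun _ => gaussianReal 0 (t:NNReal)⁻¹)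
          = (Real.sqrt (1 - 2*θ*(t:ℝ)⁻¹))⁻¹ := by
        rw [hg.2, huu, hw]
        norm_num
      have hpp := piProd (Measure.pi fun _ : Fin n => gaussianReal 0 (t:NNReal)⁻¹)
        (fun x => Real.exp (θ*(0 + ∑ j, u j * x j)^2)) hg.1 t
      have hfun : (fun r : Fin t → Fin n → ℝ => Real.exp (θ * X r))
          = fun r => ∏ ℓ, Real.exp (θ*(0 + ∑ j, u j * r ℓ j)^2) := by
        funext r
        rw [← Real.exp_sum, hX, Finset.mul_sum]
        norm_num
      constructor
      · rw [hfun]; exact hpp.1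
      · rw [hfun, hpp.2, hval]
    -- upper tail
    have hup : μ {r | 1 + δ ≤ X r} ≤ ENNReal.ofReal (Real.exp (-(δ^2*(t:ℝ)/16))) := by
      have hθc : 2*((t:ℝ)*δ/8)*(t:ℝ)⁻¹ < 1 := by
        rw [show 2*((t:ℝ)*δ/8)*(t:ℝ)⁻¹ = ((t:ℝ)*(t:ℝ)⁻¹)*(δ/4) from by ring,
          mul_inv_cancel₀ htR.ne', one_mul]
        linarith
      have hm := hmgf ((t:ℝ)*δ/8) hθc
      have hcher := measure_ge_le_exp_mul_mgf (μ := μ) (X := X) (1+δ)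
        (by positivity : (0:ℝ) ≤ (t:ℝ)*δ/8) hm.1
      rw [ENNReal.le_ofReal_iff_toReal_le (measure_ne_top μ _) (Real.exp_pos _).le]
      refine hcher.trans ?_
      have harg : 1 - 2*((t:ℝ)*δ/8)*(t:ℝ)⁻¹ = 1 - δ/4 := by
        rw [show 2*((t:ℝ)*δ/8)*(t:ℝ)⁻¹ = ((t:ℝ)*(t:ℝ)⁻¹)*(δ/4) from by ring,
          mul_inv_cancel₀ htR.ne', one_mul]
      have hmval : mgf X μ ((t:ℝ)*δ/8) = ((Real.sqrt (1 - δ/4))⁻¹)^t := by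
        rw [mgf, hm.2, harg]
      rw [hmval]
      exact chern_up hδ0 hδ1 t
    -- lower tail
    have hlow : μ {r | X r ≤ 1 - δ} ≤ ENNReal.ofReal (Real.exp (-(δ^2*(t:ℝ)/16))) := by
      have hθc : 2*(-((t:ℝ)*δ/4))*(t:ℝ)⁻¹ < 1 := by
        rw [show 2*(-((t:ℝ)*δ/4))*(t:ℝ)⁻¹ = ((t:ℝ)*(t:ℝ)⁻¹)*(-(δ/2)) from by ring,
          mul_inv_cancel₀ htR.ne', one_mul]
        linarith
      have hm := hmgf (-((t:ℝ)*δ/4)) hθc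
      have hcher := measure_le_le_exp_mul_mgf (μ := μ) (X := X) (1-δ)
        (neg_nonpos.mpr (by positivity : (0:ℝ) ≤ (t:ℝ)*δ/4)) hm.1
      rw [ENNReal.le_ofReal_iff_toReal_le (measure_ne_top μ _) (Real.exp_pos _).le]
      refine hcher.trans ?_
      have harg : 1 - 2*(-((t:ℝ)*δ/4))*(t:ℝ)⁻¹ = 1 + δ/2 := by
        rw [show 2*(-((t:ℝ)*δ/4))*(t:ℝ)⁻¹ = ((t:ℝ)*(t:ℝ)⁻¹)*(-(δ/2)) from by ring,
          mul_inv_cancel₀ htR.ne', one_mul]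
        ring
      have hmval : mgf X μ (-((t:ℝ)*δ/4)) = ((Real.sqrt (1 + δ/2))⁻¹)^t := by
        rw [mgf, hm.2, harg]
      rw [hmval]
      exact chern_low hδ0 hδ1 t
    -- union bound
    have hsub : {r : Fin t → Fin n → ℝ | ¬((1-δ) * ρ ≤ (∑ ℓ, (∑ s, a s * r ℓ s)^2) ∧
          (∑ ℓ, (∑ s, a s * r ℓ s)^2) ≤ (1+δ) * ρ)}
        ⊆ {r | 1 + δ ≤ X r} ∪ {r | X r ≤ 1 - δ} := by
      intro r hr
      rcases not_and_or.mp hr with hb | hb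
      · right
        have hS : (∑ ℓ, (∑ s, a s * r ℓ s)^2) < (1-δ) * ρ := lt_of_not_ge hb
        have : X r < 1 - δ := by
          rw [hXS r, div_lt_iff₀ htRρ']
          · linarith [hS]
        exact le_of_lt this
      · left
        have hS : (1+δ) * ρ < (∑ ℓ, (∑ s, a s * r ℓ s)^2) := lt_of_not_ge hb
        have : 1 + δ < X r := by
          rw [hXS r, lt_div_iff₀ htRρ']
          linarith [hS]
        exact le_of_lt this
    calc μ _ ≤ μ ({r | 1 + δ ≤ X r} ∪ {r | X r ≤ 1 - δ}) := measure_mono hsub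
      _ ≤ μ {r | 1 + δ ≤ X r} + μ {r | X r ≤ 1 - δ} := measure_union_le _ _
      _ ≤ ENNReal.ofReal (Real.exp (-(δ^2*(t:ℝ)/16)))
          + ENNReal.ofReal (Real.exp (-(δ^2*(t:ℝ)/16))) := add_le_add hup hlow
      _ = ENNReal.ofReal (2 * Real.exp (-(δ^2*(t:ℝ)/16))) := by
          rw [two_mul, ENNReal.ofReal_add (Real.exp_pos _).le (Real.exp_pos _).le]

end Aux

/-- Theorem III.1: there is an absolute constant `γ > 0` such that, if
`r¹,…,rᵗ ∈ ℝⁿ` are i.i.d. zero-mean Gaussian vectors with covariance `(1/t)·I`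
(equivalently, all coordinates are i.i.d. `N(0, 1/t)`) and `r^ℓ_b = U_k U_kᵀ r^ℓ`
is the ideal low-pass filtering of `r^ℓ` with cut-off `λ_k` (using `λ_k < λ_{k+1}`),
then for `t ≥ (γ/δ²)·log(2n/ε)`, with probability at least `1−ε`,
`(1−δ)‖U_kᵀφᵢ‖₂² ≤ ∑_ℓ ⟨r^ℓ_b, φᵢ⟩² ≤ (1+δ)‖U_kᵀφᵢ‖₂²` for all `i`. -/
theorem estimated_energies_concentration :
    ∃ γ : ℝ, 0 < γ ∧
      ∀ (n k : ℕ) (hk1 : 1 ≤ k) (hkn : k < n)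
        (L U : Matrix (Fin n) (Fin n) ℝ) (lam : Fin n → ℝ),
        Monotone lam →
        lam ⟨k - 1, by omega⟩ < lam ⟨k, hkn⟩ →
        Uᵀ * U = 1 → U * Uᵀ = 1 →
        L = U * Matrix.diagonal lam * Uᵀ →
        ∀ (Φ : Matrix (Fin n) (Fin n) ℝ) (Uk : Matrix (Fin n) (Fin k) ℝ),
          Uk = U.submatrix id (Fin.castLE hkn.le) →
        ∀ (ε δ : ℝ), ε ∈ Set.Ioo (0 : ℝ) 1 → δ ∈ Set.Ioo (0 : ℝ) 1 →
        ∀ t : ℕ, γ / δ ^ 2 * Real.log (2 * n / ε) ≤ (t : ℝ) →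
        ENNReal.ofReal (1 - ε) ≤
          (Measure.pi fun _ : Fin t => Measure.pi fun _ : Fin n =>
              gaussianReal 0 (t : NNReal)⁻¹)
            {r : Fin t → Fin n → ℝ | ∀ i : Fin n,
              (1 - δ) * (∑ j : Fin k, ((Ukᵀ *ᵥ Φ i) j) ^ 2) ≤
                  (∑ ℓ : Fin t, (∑ s : Fin n, (Uk *ᵥ (Ukᵀ *ᵥ r ℓ)) s * Φ i s) ^ 2) ∧
                (∑ ℓ : Fin t, (∑ s : Fin n, (Uk *ᵥ (Ukᵀ *ᵥ r ℓ)) s * Φ i s) ^ 2) ≤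
                  (1 + δ) * (∑ j : Fin k, ((Ukᵀ *ᵥ Φ i) j) ^ 2)} := by
  refine ⟨16, by norm_num, ?_⟩
  intro n k hk1 hkn L U lam hmono hgap hUtU hUUt hL Φ Uk hUk ε δ hε hδ t hT
  obtain ⟨hε0, hε1⟩ := hε
  obtain ⟨hδ0, hδ1⟩ := hδ
  have hn2 : 2 ≤ n := by omega
  have hnR : (2:ℝ) ≤ (n:ℝ) := by exact_mod_cast hn2
  have hlog : 0 < Real.log (2*(n:ℝ)/ε) := by
    apply Real.log_pos
    rw [lt_div_iff₀ hε0]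
    nlinarith
  have htpos : (0:ℝ) < (t:ℝ) := lt_of_lt_of_le (by positivity) hT
  have ht1 : 1 ≤ t := by exact_mod_cast Nat.one_le_iff_ne_zero.mpr (by
    intro h0; rw [h0] at htpos; norm_num at htpos)
  set μ := (Measure.pi fun _ : Fin t => Measure.pi fun _ : Fin n =>
      gaussianReal 0 (t:NNReal)⁻¹) with hμ
  -- orthonormal columns
  have hUkK : Ukᵀ * Uk = (1 : Matrix (Fin k) (Fin k) ℝ) := by
    subst hUk
    ext j j'
    have h1 : (U.submatrix id (Fin.castLE hkn.le))ᵀ * U.submatrix id (Fin.castLE hkn.le) =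
        (Uᵀ * U).submatrix (Fin.castLE hkn.le) (Fin.castLE hkn.le) := by
      ext p q
      simp [Matrix.mul_apply, Matrix.transpose_apply, Matrix.submatrix_apply]
    rw [h1, hUtU]
    simp [Matrix.submatrix_apply, Matrix.one_apply, Fin.castLE_inj]
  -- the vectors
  set a : Fin n → Fin n → ℝ := fun i => Uk *ᵥ (Ukᵀ *ᵥ Φ i) with ha
  have claim1 : ∀ (i : Fin n) (x : Fin n → ℝ),
      (∑ s, (Uk *ᵥ (Ukᵀ *ᵥ x)) s * Φ i s) = ∑ s, a i s * x s := by
    intro i x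
    have e1 : (∑ s, (Uk *ᵥ (Ukᵀ *ᵥ x)) s * Φ i s) = (Uk *ᵥ (Ukᵀ *ᵥ x)) ⬝ᵥ Φ i := rfl
    have e2 : (∑ s, a i s * x s) = a i ⬝ᵥ x := rfl
    rw [e1, e2, ha]
    rw [dotProduct_comm, dotProduct_mulVec, ← Matrix.mulVec_transpose,
      dotProduct_comm ((Uk *ᵥ Ukᵀ *ᵥ Φ i)) x, dotProduct_mulVec, ← Matrix.mulVec_transpose,
      dotProduct_comm, Matrix.transpose_transpose]
  have claim2 : ∀ i : Fin n, (∑ s, (a i s)^2) = ∑ j : Fin k, ((Ukᵀ *ᵥ Φ i) j)^2 := by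
    intro i
    have e1 : (∑ s, (a i s)^2) = a i ⬝ᵥ a i := by
      simp [dotProduct, pow_two]
    have e2 : (∑ j : Fin k, ((Ukᵀ *ᵥ Φ i) j)^2) = (Ukᵀ *ᵥ Φ i) ⬝ᵥ (Ukᵀ *ᵥ Φ i) := by
      simp [dotProduct, pow_two]
    rw [e1, e2, ha]
    rw [dotProduct_comm, dotProduct_mulVec, ← Matrix.mulVec_transpose,
      Matrix.mulVec_mulVec, hUkK, Matrix.one_mulVec]
  -- condition equivalence
  have hiff : ∀ (i : Fin n) (r : Fin t → Fin n → ℝ),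
      ((1 - δ) * (∑ j : Fin k, ((Ukᵀ *ᵥ Φ i) j) ^ 2) ≤
          (∑ ℓ : Fin t, (∑ s : Fin n, (Uk *ᵥ (Ukᵀ *ᵥ r ℓ)) s * Φ i s) ^ 2) ∧
        (∑ ℓ : Fin t, (∑ s : Fin n, (Uk *ᵥ (Ukᵀ *ᵥ r ℓ)) s * Φ i s) ^ 2) ≤
          (1 + δ) * (∑ j : Fin k, ((Ukᵀ *ᵥ Φ i) j) ^ 2))
      ↔ ((1-δ) * (∑ s, (a i s)^2) ≤ (∑ ℓ, (∑ s, a i s * r ℓ s)^2) ∧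
          (∑ ℓ, (∑ s, a i s * r ℓ s)^2) ≤ (1+δ) * (∑ s, (a i s)^2)) := by
    intro i r
    have hS : (∑ ℓ : Fin t, (∑ s : Fin n, (Uk *ᵥ (Ukᵀ *ᵥ r ℓ)) s * Φ i s) ^ 2)
        = ∑ ℓ, (∑ s, a i s * r ℓ s)^2 := by
      refine Finset.sum_congr rfl fun ℓ _ => ?_
      rw [claim1 i (r ℓ)]
    rw [hS, claim2 i]
  -- bad sets
  set Bad : Fin n → Set (Fin t → Fin n → ℝ) := fun i =>
    {r | ¬((1-δ) * (∑ s, (a i s)^2) ≤ (∑ ℓ, (∑ s, a i s * r ℓ s)^2) ∧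
        (∑ ℓ, (∑ s, a i s * r ℓ s)^2) ≤ (1+δ) * (∑ s, (a i s)^2))} with hBad
  set E : Set (Fin t → Fin n → ℝ) := {r | ∀ i : Fin n,
      (1 - δ) * (∑ j : Fin k, ((Ukᵀ *ᵥ Φ i) j) ^ 2) ≤
          (∑ ℓ : Fin t, (∑ s : Fin n, (Uk *ᵥ (Ukᵀ *ᵥ r ℓ)) s * Φ i s) ^ 2) ∧
        (∑ ℓ : Fin t, (∑ s : Fin n, (Uk *ᵥ (Ukᵀ *ᵥ r ℓ)) s * Φ i s) ^ 2) ≤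
          (1 + δ) * (∑ j : Fin k, ((Ukᵀ *ᵥ Φ i) j) ^ 2)} with hE
  have hcover : (Set.univ : Set (Fin t → Fin n → ℝ)) ⊆ E ∪ ⋃ i, Bad i := by
    intro r _
    by_cases hr : ∀ i : Fin n,
        (1 - δ) * (∑ j : Fin k, ((Ukᵀ *ᵥ Φ i) j) ^ 2) ≤
            (∑ ℓ : Fin t, (∑ s : Fin n, (Uk *ᵥ (Ukᵀ *ᵥ r ℓ)) s * Φ i s) ^ 2) ∧
          (∑ ℓ : Fin t, (∑ s : Fin n, (Uk *ᵥ (Ukᵀ *ᵥ r ℓ)) s * Φ i s) ^ 2) ≤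
            (1 + δ) * (∑ j : Fin k, ((Ukᵀ *ᵥ Φ i) j) ^ 2)
    · left; exact hr
    · right
      obtain ⟨i, hi⟩ := not_forall.mp hr
      refine Set.mem_iUnion.mpr ⟨i, ?_⟩
      rw [hBad]
      simp only [Set.mem_setOf_eq]
      rw [← hiff i r]
      exact hi
  have hbound : ∀ i : Fin n, μ (Bad i) ≤ ENNReal.ofReal (2 * Real.exp (-(δ^2*(t:ℝ)/16))) :=
    fun i => central n t ht1 (a i) hδ0 hδ1
  have hUnion : μ (⋃ i, Bad i) ≤ ENNReal.ofReal ε := by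
    calc μ (⋃ i, Bad i) ≤ ∑' i : Fin n, μ (Bad i) := measure_iUnion_le _
      _ = ∑ i : Fin n, μ (Bad i) := tsum_fintype _
      _ ≤ ∑ i : Fin n, ENNReal.ofReal (2 * Real.exp (-(δ^2*(t:ℝ)/16))) :=
          Finset.sum_le_sum fun i _ => hbound i
      _ = (n : ℝ≥0∞) * ENNReal.ofReal (2 * Real.exp (-(δ^2*(t:ℝ)/16))) := by
          rw [Finset.sum_const, Finset.card_univ, Fintype.card_fin, nsmul_eq_mul]
      _ = ENNReal.ofReal ((n:ℝ) * (2 * Real.exp (-(δ^2*(t:ℝ)/16)))) := by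
          rw [← ENNReal.ofReal_natCast n, ← ENNReal.ofReal_mul (by positivity : (0:ℝ) ≤ (n:ℝ))]
      _ ≤ ENNReal.ofReal ε := by
          apply ENNReal.ofReal_le_ofReal
          -- key numeric bound
          have hexp : Real.exp (-(δ^2*(t:ℝ)/16)) ≤ ε / (2*(n:ℝ)) := by
            have h1 : Real.log (2*(n:ℝ)/ε) ≤ δ^2*(t:ℝ)/16 := by
              have h2 := mul_le_mul_of_nonneg_left hT (by positivity : (0:ℝ) ≤ δ^2/16)
              rw [show δ^2/16 * (16/δ^2 * Real.log (2*(n:ℝ)/ε)) = Real.log (2*(n:ℝ)/ε) from by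
                field_simp] at h2
              linarith
            have h3 : Real.exp (-(δ^2*(t:ℝ)/16)) ≤ Real.exp (-Real.log (2*(n:ℝ)/ε)) := by
              rw [Real.exp_le_exp]; linarith
            refine h3.trans_eq ?_
            rw [Real.exp_neg, Real.exp_log (by positivity), inv_div]
          calc (n:ℝ) * (2 * Real.exp (-(δ^2*(t:ℝ)/16)))
              ≤ (n:ℝ) * (2 * (ε / (2*(n:ℝ)))) := by
                apply mul_le_mul_of_nonneg_left _ (by positivity)
                apply mul_le_mul_of_nonneg_left hexp (by norm_num)
            _ = ε := by field_simp
  -- conclude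
  have huniv : (1 : ℝ≥0∞) ≤ μ E + μ (⋃ i, Bad i) := by
    have h1 : μ Set.univ = 1 := measure_univ
    calc (1 : ℝ≥0∞) = μ Set.univ := h1.symm
      _ ≤ μ (E ∪ ⋃ i, Bad i) := measure_mono hcover
      _ ≤ μ E + μ (⋃ i, Bad i) := measure_union_le _ _
  have hfinal : (1 : ℝ≥0∞) ≤ μ E + ENNReal.ofReal ε := huniv.trans (add_le_add_right hUnion _)
  have hsplit : ENNReal.ofReal (1-ε) + ENNReal.ofReal ε = 1 := by
    rw [← ENNReal.ofReal_add (by linarith) hε0.le]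
    norm_num
  have := hfinal
  rw [← hsplit] at this
  exact (ENNReal.add_le_add_iff_right ENNReal.ofReal_ne_top).mp this
end
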